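/- Let k, R > 0, let A be a finite subset of the closed ball of radius R in ℝ^k such that |p − q| is a positive integer for all distinct p, q ∈ A. Let φ : B_k(0,R) → ℝ^m satisfy c·|p−q|^{1/2} ≤ |φ(p) − φ(q)| ≤ C·|p−q|^{1/2} for all p, q, with 0 < c ≤ C, and φ(0) = 0. Let δ ≤ 2c²/(3C² + 2c²) be positive, and let λ satisfy √(3δ)/c ≤ λ ≤ √(2(1−δ))/C. Then the set {(p, λφ(p)) : p ∈ A} ⊂ ℝ^{k+m} has all pairwise distances strictly more than δ away from every integer, and is contained in the closed ball of radius √(R² + 2R). -/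

import Mathlib

/-- Distance from a real number to the nearest integer. -/
noncomputable def nearestIntDist (t : ℝ) : ℝ := |t - round t|

lemma sqrt_between (a r δ : ℝ) (ha : 1 ≤ a) (hδ0 : 0 < δ) (hδ1 : δ < 1/2)
    (h1 : 3*δ*a ≤ r) (h2 : r ≤ 2*(1-δ)*a) :
    a + δ < Real.sqrt (a^2 + r) ∧ Real.sqrt (a^2 + r) < a + 1 - δ := by
  constructor
  · rw [show a + δ < Real.sqrt (a^2+r) ↔ (a+δ)^2 < a^2+r from Real.lt_sqrt (by positivity)]
    nlinarith
  · rw [show Real.sqrt (a^2+r) < a+1-δ ↔ a^2+r < (a+1-δ)^2 from Real.sqrt_lt' (by linarith)]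
    nlinarith

lemma nid_gt (n : ℕ) (d δ : ℝ) (h1 : (n:ℝ) + δ < d) (h2 : d < (n:ℝ) + 1 - δ) :
    δ < nearestIntDist d := by
  by_contra h
  push_neg at h
  unfold nearestIntDist at h
  rw [abs_le] at h
  have hz1 : (n:ℝ) < (round d : ℤ) := by linarith
  have hz2 : ((round d : ℤ):ℝ) < (n:ℝ) + 1 := by linarith
  have h1' : (n:ℤ) < round d := by exact_mod_cast hz1
  have h2' : (round d) < (n:ℤ) + 1 := by exact_mod_cast hz2
  omega


lemma sq_lo (c n d : ℝ) (hc : 0 ≤ c) (hn : 0 ≤ n) (h : c * Real.sqrt n ≤ d) :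
    c^2 * n ≤ d^2 := by
  have h1 := mul_le_mul h h (by positivity) (le_trans (by positivity) h)
  nlinarith [Real.sq_sqrt hn, Real.sqrt_nonneg n]

lemma sq_hi (Cv n d : ℝ) (hd : 0 ≤ d) (hn : 0 ≤ n) (h : d ≤ Cv * Real.sqrt n) :
    d^2 ≤ Cv^2 * n := by
  have h1 := mul_le_mul h h hd (le_trans hd h)
  nlinarith [Real.sq_sqrt hn, Real.sqrt_nonneg n]

lemma r_lo (lam c δ n d : ℝ) (hc : 0 < c) (hδ : 0 ≤ δ) (hn : 0 ≤ n)
    (h1 : 3*δ ≤ lam^2 * c^2) (h2 : c^2 * n ≤ d^2) : 3*δ*n ≤ (lam*d)^2 := by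
  have h := mul_le_mul h1 h2 (by positivity) (by nlinarith [sq_nonneg lam, sq_nonneg c])
  nlinarith [sq_nonneg (lam*d)]

lemma r_hi (lam Cv δ n d : ℝ) (hC : 0 < Cv) (hδ : δ ≤ 1) (hn : 0 ≤ n) (hd : 0 ≤ d^2)
    (h1 : lam^2 * Cv^2 ≤ 2*(1-δ)) (h2 : d^2 ≤ Cv^2 * n) : (lam*d)^2 ≤ 2*(1-δ)*n := by
  have h := mul_le_mul h1 h2 hd (by linarith)
  nlinarith [sq_nonneg lam]

theorem stmt12 (k m : ℕ) (R : ℝ) (hR : 0 < R)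
    (A : Finset (EuclideanSpace ℝ (Fin k)))
    (hA : ∀ p ∈ A, p ∈ Metric.closedBall (0 : EuclideanSpace ℝ (Fin k)) R)
    (hint : ∀ p ∈ A, ∀ q ∈ A, p ≠ q → ∃ n : ℕ, 0 < n ∧ dist p q = n)
    (φ : EuclideanSpace ℝ (Fin k) → EuclideanSpace ℝ (Fin m)) (c C : ℝ)
    (hc : 0 < c) (hcC : c ≤ C)
    (hφ : ∀ p ∈ Metric.closedBall (0 : EuclideanSpace ℝ (Fin k)) R,
      ∀ q ∈ Metric.closedBall (0 : EuclideanSpace ℝ (Fin k)) R,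
        c * Real.sqrt (dist p q) ≤ dist (φ p) (φ q) ∧
        dist (φ p) (φ q) ≤ C * Real.sqrt (dist p q))
    (hφ0 : φ 0 = 0)
    (δ : ℝ) (hδ0 : 0 < δ) (hδ : δ ≤ 2 * c^2 / (3 * C^2 + 2 * c^2))
    (lam : ℝ) (hlam1 : Real.sqrt (3 * δ) / c ≤ lam)
    (hlam2 : lam ≤ Real.sqrt (2 * (1 - δ)) / C)
    (lift : EuclideanSpace ℝ (Fin k) →
      WithLp 2 (EuclideanSpace ℝ (Fin k) × EuclideanSpace ℝ (Fin m)))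
    (hlift : ∀ p, lift p = (WithLp.equiv 2 _).symm (p, lam • φ p)) :
    (∀ p ∈ A, ∀ q ∈ A, p ≠ q →
      δ < nearestIntDist (dist (lift p) (lift q))) ∧
    (∀ p ∈ A, lift p ∈ Metric.closedBall
      (0 : WithLp 2 (EuclideanSpace ℝ (Fin k) × EuclideanSpace ℝ (Fin m)))
      (Real.sqrt (R^2 + 2*R))) := by
  have hC : 0 < C := lt_of_lt_of_le hc hcC
  have hδhalf : δ < 1/2 := by
    have h1 : 2 * c^2 / (3 * C^2 + 2 * c^2) ≤ 2/5 := by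
      rw [div_le_div_iff₀ (by positivity) (by norm_num)]
      nlinarith
    linarith
  have hδ1 : δ < 1 := by linarith
  have hlam0 : 0 < lam := by
    have : 0 < Real.sqrt (3 * δ) / c := by positivity
    linarith
  -- lam² bounds
  have hlamlo : 3 * δ ≤ lam^2 * c^2 := by
    have := mul_le_mul hlam1 hlam1 (by positivity) (le_of_lt hlam0)
    rw [div_mul_div_comm, Real.mul_self_sqrt (by positivity)] at this
    rw [div_le_iff₀ (by positivity)] at this
    nlinarith
  have hlamhi : lam^2 * C^2 ≤ 2 * (1 - δ) := by
    have := mul_le_mul hlam2 hlam2 (le_of_lt hlam0) (by positivity)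
    rw [div_mul_div_comm, Real.mul_self_sqrt (by linarith)] at this
    rw [le_div_iff₀ (by positivity)] at this
    nlinarith
  -- dist formula
  have hdist : ∀ p q, dist (lift p) (lift q) =
      Real.sqrt (dist p q ^ 2 + (lam * dist (φ p) (φ q)) ^ 2) := by
    intro p q
    simp only [hlift, WithLp.prod_dist_eq_of_L2, WithLp.equiv_symm_apply, WithLp.toLp_fst,
      WithLp.toLp_snd, dist_smul₀, Real.norm_eq_abs, abs_of_pos hlam0]
  constructor
  · intro p hp q hq hpq
    obtain ⟨n, hn0, hn⟩ := hint p hp q hq hpq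
    have hpb := hA p hp
    have hqb := hA q hq
    obtain ⟨hlo, hhi⟩ := hφ p hpb q hqb
    set dφ := dist (φ p) (φ q) with hdφ
    have hdφ0 : 0 ≤ dφ := dist_nonneg
    have hn1 : (1:ℝ) ≤ (n:ℝ) := by exact_mod_cast hn0
    have hn0' : (0:ℝ) ≤ (n:ℝ) := by linarith
    rw [hn] at hlo hhi
    have hsq : Real.sqrt ((n:ℝ)) ^ 2 = (n : ℝ) := Real.sq_sqrt hn0'
    have hsn : (0:ℝ) ≤ Real.sqrt ((n:ℝ)) := Real.sqrt_nonneg _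
    -- bounds on dφ²
    have hdφlo : c^2 * n ≤ dφ^2 := sq_lo c n dφ hc.le hn0' hlo
    have hdφhi : dφ^2 ≤ C^2 * n := sq_hi C n dφ hdφ0 hn0' hhi
    have hr1 : 3*δ*(n:ℝ) ≤ (lam * dφ)^2 :=
      r_lo lam c δ n dφ hc hδ0.le hn0' hlamlo hdφlo
    have hr2 : (lam * dφ)^2 ≤ 2*(1-δ)*(n:ℝ) :=
      r_hi lam C δ n dφ hC hδ1.le hn0' (sq_nonneg dφ) hlamhi hdφhi
    have key := sqrt_between (n:ℝ) ((lam*dφ)^2) δ hn1 hδ0 hδhalf hr1 hr2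
    rw [hdist p q, hn]
    exact nid_gt n _ δ key.1 (by linarith [key.2])
  · intro p hp
    have hpb := hA p hp
    have h0b : (0 : EuclideanSpace ℝ (Fin k)) ∈ Metric.closedBall (0 : EuclideanSpace ℝ (Fin k)) R :=
      Metric.mem_closedBall_self (le_of_lt hR)
    obtain ⟨_, hhi⟩ := hφ p hpb 0 h0b
    rw [hφ0] at hhi
    have hpR : dist p 0 ≤ R := Metric.mem_closedBall.mp hpb
    rw [Metric.mem_closedBall]
    have h0 : dist (lift p) 0 = Real.sqrt (dist p 0 ^ 2 + (lam * dist (φ p) 0) ^ 2) := by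
      have h := hdist p 0
      rw [hφ0] at h
      rw [show lift 0 = 0 by rw [hlift 0, hφ0, smul_zero]; rfl] at h
      exact h
    rw [h0]
    apply Real.sqrt_le_sqrt
    have hd0 : 0 ≤ dist p 0 := dist_nonneg
    have h1 : dist p 0 ^ 2 ≤ R^2 := by nlinarith
    have h2 : (lam * dist (φ p) 0)^2 ≤ 2 * R := by
      have hsq : Real.sqrt (dist p 0) ^ 2 = dist p 0 := Real.sq_sqrt hd0
      have hdn : (0:ℝ) ≤ dist (φ p) 0 := dist_nonneg
      have := mul_le_mul hhi hhi hdn (by positivity)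
      nlinarith
    linarith
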